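/- Let k, l be positive natural numbers, let F be an l×l complex matrix and G a k×k complex matrix such that F and G have no common eigenvalue, i.e. the spectrum of F and the spectrum of G (as elements of the corresponding matrix algebras over ℂ) are disjoint. Then the linear endomorphism of the space of k×l complex matrices given by Z ↦ Z·F − G·Z is bijective. -/

import Mathlib

open Polynomial Matrix

lemma eval_charpoly_aux {n : Type*} [Fintype n] [DecidableEq n]
    {R : Type*} [CommRing R] (M : Matrix n n R) (μ : R) :
    (M.charpoly).eval μ = (algebraMap R (Matrix n n R) μ - M).det := by
  rw [Matrix.charpoly, ← Polynomial.coe_evalRingHom, RingHom.map_det]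
  congr 1
  ext i j
  by_cases h : i = j <;>
    simp [h, charmatrix_apply_eq, charmatrix_apply_ne, Matrix.algebraMap_matrix_apply,
      Matrix.map_apply]

lemma mem_spectrum_of_isRoot {n : Type*} [Fintype n] [DecidableEq n]
    {K : Type*} [Field K] (M : Matrix n n K) (μ : K)
    (h : (M.charpoly).IsRoot μ) : μ ∈ spectrum K M := by
  rw [spectrum.mem_iff]
  intro hu
  rw [Matrix.isUnit_iff_isUnit_det] at hu
  rw [Polynomial.IsRoot, eval_charpoly_aux] at h
  rw [h] at hu
  exact hu.ne_zero rfl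

/-- If the `l×l` complex matrix `F` and the `k×k` complex matrix `G` have disjoint spectra,
then `Z ↦ Z F - G Z` is a bijective endomorphism of the space of `k×l` complex matrices. -/
theorem stmt_15 (k l : ℕ) (hk : 0 < k) (hl : 0 < l)
    (F : Matrix (Fin l) (Fin l) ℂ) (G : Matrix (Fin k) (Fin k) ℂ)
    (h : spectrum ℂ F ∩ spectrum ℂ G = ∅) :
    Function.Bijective (fun Z : Matrix (Fin k) (Fin l) ℂ => Z * F - G * Z) := by
  set L : Matrix (Fin k) (Fin l) ℂ →ₗ[ℂ] Matrix (Fin k) (Fin l) ℂ :=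
    { toFun := fun Z => Z * F - G * Z
      map_add' := fun X Y => by rw [Matrix.add_mul, Matrix.mul_add]; abel
      map_smul' := fun c X => by simp [smul_sub, smul_mul_assoc, mul_smul_comm] } with hL
  have hinj : Function.Injective L := by
    rw [injective_iff_map_eq_zero]
    intro Z hZ
    have hZF : Z * F = G * Z := by
      have h0 : Z * F - G * Z = 0 := hZ
      rw [sub_eq_zero] at h0; exact h0
    have hpow : ∀ m : ℕ, Z * F ^ m = G ^ m * Z := by
      intro m
      induction m with
      | zero => simp
      | succ m ih =>
        rw [pow_succ, ← Matrix.mul_assoc, ih, Matrix.mul_assoc, hZF,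
          ← Matrix.mul_assoc, ← pow_succ]
    have key : ∀ p : ℂ[X], Z * (aeval F p) = (aeval G p) * Z := by
      intro p
      induction p using Polynomial.induction_on' with
      | add p q hp hq => rw [map_add, map_add, Matrix.mul_add, Matrix.add_mul, hp, hq]
      | monomial n a =>
        rw [aeval_monomial, aeval_monomial, ← Algebra.smul_def, ← Algebra.smul_def,
          Matrix.mul_smul, Matrix.smul_mul, hpow n]
    have hcf : (aeval G F.charpoly) * Z = 0 := by
      rw [← key, Matrix.aeval_self_charpoly, Matrix.mul_zero]
    have hunit : IsUnit (aeval G F.charpoly) := by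
      by_contra hu
      have hsplit : F.charpoly.Splits := IsAlgClosed.splits _
      have hfact := hsplit.eq_prod_roots_of_monic F.charpoly_monic
      rw [hfact] at hu
      obtain ⟨r, hrG, hr0⟩ := spectrum.exists_mem_of_not_isUnit_aeval_prod hu
      have hrF : r ∈ spectrum ℂ F := mem_spectrum_of_isRoot F r hr0
      have : r ∈ spectrum ℂ F ∩ spectrum ℂ G := ⟨hrF, hrG⟩
      rw [h] at this
      exact this
    obtain ⟨u, hu⟩ := hunit
    calc Z = ((↑u⁻¹ : Matrix (Fin k) (Fin k) ℂ) * ↑u) * Z := by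
            rw [Units.inv_mul, Matrix.one_mul]
      _ = (↑u⁻¹ : Matrix (Fin k) (Fin k) ℂ) * ((aeval G F.charpoly) * Z) := by
            rw [Matrix.mul_assoc, hu]
      _ = 0 := by rw [hcf, Matrix.mul_zero]
  exact ⟨hinj, (LinearMap.injective_iff_surjective).mp hinj⟩
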